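/- Let γ₁, γ₂ be nonnegative integers with γ₁ = γ₂ and let w₁, w₂ be integers with w₁ + γ₁ < w₂. For every i with 0 ≤ i ≤ γ₁, there exists a path P with γ₁ + γ₂ + 1 vertices and end-vertices w₁+i and w₂+i, whose vertices alternate between the intervals J₁ = [w₁, w₁+γ₁] and J₂ = [w₂, w₂+γ₂], using each element of J₁ ∪ J₂ exactly once, and whose multiset of edge differences (larger endpoint minus smaller) equals exactly the set of integers from w₂ − (w₁+γ₁) to (w₂+γ₂) − w₁. -/

import Mathlib

/-- Edges of a path given by the list of its vertices. -/
def pathEdges (l : List ℤ) : Multiset (ℤ × ℤ) := ↑(l.zip l.tail)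

/-- Absolute edge differences of a multiset of edges. -/
def diffs (E : Multiset (ℤ × ℤ)) : Multiset ℤ := E.map fun p => |p.1 - p.2|

namespace Stmt5Aux

/-! ### Multiset interval helpers -/

lemma count_Icc_val (l u a : ℤ) :
    Multiset.count a (Finset.Icc l u).val = if l ≤ a ∧ a ≤ u then 1 else 0 := by
  rw [Multiset.count_eq_of_nodup (Finset.Icc l u).nodup]
  congr 1
  simp only [eq_iff_iff, Finset.mem_val, Finset.mem_Icc]

lemma Icc_val_map_add (c a b : ℤ) :
    (Finset.Icc a b).val.map (fun x => x + c) = (Finset.Icc (a+c) (b+c)).val := by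
  have hinj : Function.Injective (fun x : ℤ => x + c) := fun x y h => by
    simpa using h
  have key : Finset.map ⟨fun x => x + c, hinj⟩ (Finset.Icc a b) = Finset.Icc (a+c) (b+c) := by
    ext x
    simp only [Finset.mem_map, Finset.mem_Icc, Function.Embedding.coeFn_mk]
    constructor
    · rintro ⟨y, hy, rfl⟩; omega
    · intro hx; exact ⟨x - c, by omega, by omega⟩
  rw [← key, Finset.map_val]
  rfl

lemma Icc_val_map_addl (c a b : ℤ) :
    (Finset.Icc a b).val.map (fun x => c + x) = (Finset.Icc (c+a) (c+b)).val := by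
  have h : (fun x : ℤ => c + x) = (fun x : ℤ => x + c) := by funext x; ring
  rw [h, Icc_val_map_add]
  congr 1 <;> ring

lemma Icc_val_map_neg (a b : ℤ) :
    (Finset.Icc a b).val.map (fun x => -x) = (Finset.Icc (-b) (-a)).val := by
  have hinj : Function.Injective (fun x : ℤ => -x) := fun x y h => by
    simpa using h
  have key : Finset.map ⟨fun x => -x, hinj⟩ (Finset.Icc a b) = Finset.Icc (-b) (-a) := by
    ext x
    simp only [Finset.mem_map, Finset.mem_Icc, Function.Embedding.coeFn_mk]
    constructor
    · rintro ⟨y, hy, rfl⟩; omega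
    · intro hx; exact ⟨-x, by omega, by omega⟩
  rw [← key, Finset.map_val]
  rfl

lemma Icc_val_map_sub (c a b : ℤ) :
    (Finset.Icc a b).val.map (fun x => c - x) = (Finset.Icc (c-b) (c-a)).val := by
  have h : (fun x : ℤ => c - x) = ((fun x : ℤ => x + c) ∘ (fun x : ℤ => -x)) := by
    funext x
    simp only [Function.comp_apply]
    ring
  rw [h, ← Multiset.map_map, Icc_val_map_neg, Icc_val_map_add]
  congr 1 <;> ring

/-! ### Alternating paths as lists of pairs -/

/-- Signed differences `b - a` along an alternating path given by pairs `(aᵤ, bᵤ)`. -/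
def ndiffs : List (ℤ × ℤ) → Multiset ℤ
  | [] => 0
  | [p] => {p.2 - p.1}
  | p :: q :: t => (p.2 - p.1) ::ₘ (p.2 - q.1) ::ₘ ndiffs (q :: t)

def headFst : List (ℤ × ℤ) → ℤ
  | [] => 0
  | p :: _ => p.1

def lastSnd : List (ℤ × ℤ) → ℤ
  | [] => 0
  | [p] => p.2
  | _ :: q :: t => lastSnd (q :: t)

lemma ndiffs_cons_cons (p q : ℤ × ℤ) (t : List (ℤ × ℤ)) :
    ndiffs (p :: q :: t) = (p.2 - p.1) ::ₘ (p.2 - q.1) ::ₘ ndiffs (q :: t) := rfl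

lemma ndiffs_singleton (p : ℤ × ℤ) : ndiffs [p] = {p.2 - p.1} := rfl

lemma ndiffs_cons (p : ℤ × ℤ) (L : List (ℤ × ℤ)) (h : L ≠ []) :
    ndiffs (p :: L) = (p.2 - p.1) ::ₘ (p.2 - headFst L) ::ₘ ndiffs L := by
  cases L with
  | nil => exact absurd rfl h
  | cons q t => rfl

lemma headFst_append (X Y : List (ℤ × ℤ)) (h : X ≠ []) :
    headFst (X ++ Y) = headFst X := by
  cases X with
  | nil => exact absurd rfl h
  | cons p t => rfl

lemma lastSnd_cons_cons (p q : ℤ × ℤ) (t : List (ℤ × ℤ)) :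
    lastSnd (p :: q :: t) = lastSnd (q :: t) := rfl

lemma lastSnd_append (X : List (ℤ × ℤ)) {Y : List (ℤ × ℤ)} (hY : Y ≠ []) :
    lastSnd (X ++ Y) = lastSnd Y := by
  induction X with
  | nil => rfl
  | cons p X ih =>
    cases X with
    | nil =>
      cases Y with
      | nil => exact absurd rfl hY
      | cons q t => rfl
    | cons q t => simpa [lastSnd_cons_cons] using ih

lemma ndiffs_append : ∀ (X : List (ℤ × ℤ)), X ≠ [] → ∀ (Y : List (ℤ × ℤ)), Y ≠ [] →
    ndiffs (X ++ Y) = (lastSnd X - headFst Y) ::ₘ (ndiffs X + ndiffs Y)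
  | [], h, _, _ => absurd rfl h
  | [p], _, Y, hY => by
    cases Y with
    | nil => exact absurd rfl hY
    | cons q t =>
      show ndiffs (p :: q :: t) = (p.2 - q.1) ::ₘ ({p.2 - p.1} + ndiffs (q :: t))
      rw [ndiffs_cons_cons, Multiset.singleton_add, Multiset.cons_swap]
  | p :: q :: t, _, Y, hY => by
    have ih := ndiffs_append (q :: t) (by simp) Y hY
    show ndiffs (p :: q :: (t ++ Y)) = _
    rw [show (p :: q :: (t ++ Y)) = (p :: ((q :: t) ++ Y)) from rfl]
    rw [show (p :: ((q :: t) ++ Y)) = (p :: q :: (t ++ Y)) from rfl,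
      ndiffs_cons_cons, show (q :: (t ++ Y)) = ((q :: t) ++ Y) from rfl, ih]
    rw [lastSnd_cons_cons, ndiffs_cons_cons, Multiset.cons_add, Multiset.cons_add]
    rw [Multiset.cons_swap (lastSnd (q :: t) - headFst Y)]
    congr 1
    rw [Multiset.cons_swap]

lemma ndiffs_map_shift (s t : ℤ) : ∀ (L : List (ℤ × ℤ)),
    ndiffs (L.map fun p => (p.1 + s, p.2 + t)) = (ndiffs L).map fun d => d + (t - s)
  | [] => by simp [ndiffs]
  | [p] => by
    show ({(p.2 + t) - (p.1 + s)} : Multiset ℤ) = ({p.2 - p.1} : Multiset ℤ).map _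
    rw [Multiset.map_singleton]
    congr 1
    ring
  | p :: q :: L => by
    have ih := ndiffs_map_shift s t (q :: L)
    simp only [List.map_cons] at ih ⊢
    rw [ndiffs_cons_cons, ndiffs_cons_cons p q L, ih]
    rw [Multiset.map_cons, Multiset.map_cons]
    congr 1
    · ring
    congr 1
    · ring

lemma ndiffs_map_reflect (c : ℤ) : ∀ (L : List (ℤ × ℤ)),
    ndiffs (L.map fun p => (c - p.1, c - p.2)) = (ndiffs L).map fun d => -d
  | [] => by simp [ndiffs]
  | [p] => by
    show ({(c - p.2) - (c - p.1)} : Multiset ℤ) = ({p.2 - p.1} : Multiset ℤ).map _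
    rw [Multiset.map_singleton]
    congr 1
    ring
  | p :: q :: L => by
    have ih := ndiffs_map_reflect c (q :: L)
    simp only [List.map_cons] at ih ⊢
    rw [ndiffs_cons_cons, ndiffs_cons_cons p q L, ih]
    rw [Multiset.map_cons, Multiset.map_cons]
    congr 1
    · ring
    congr 1
    · ring

lemma headFst_map_shift (s t : ℤ) (L : List (ℤ × ℤ)) (h : L ≠ []) :
    headFst (L.map fun p => (p.1 + s, p.2 + t)) = headFst L + s := by
  cases L with
  | nil => exact absurd rfl h
  | cons p t' => rfl

lemma headFst_map_reflect (c : ℤ) (L : List (ℤ × ℤ)) (h : L ≠ []) :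
    headFst (L.map fun p => (c - p.1, c - p.2)) = c - headFst L := by
  cases L with
  | nil => exact absurd rfl h
  | cons p t' => rfl

lemma lastSnd_map_shift (s t : ℤ) : ∀ (L : List (ℤ × ℤ)), L ≠ [] →
    lastSnd (L.map fun p => (p.1 + s, p.2 + t)) = lastSnd L + t
  | [], h => absurd rfl h
  | [p], _ => rfl
  | p :: q :: L, _ => by
    have ih := lastSnd_map_shift s t (q :: L) (by simp)
    simpa [lastSnd_cons_cons] using ih

lemma lastSnd_map_reflect (c : ℤ) : ∀ (L : List (ℤ × ℤ)), L ≠ [] →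
    lastSnd (L.map fun p => (c - p.1, c - p.2)) = c - lastSnd L
  | [], h => absurd rfl h
  | [p], _ => rfl
  | p :: q :: L, _ => by
    have ih := lastSnd_map_reflect c (q :: L) (by simp)
    simpa [lastSnd_cons_cons] using ih

/-- first coordinates, as a multiset -/
def fsts (L : List (ℤ × ℤ)) : Multiset ℤ := ↑(L.map Prod.fst)

/-- second coordinates, as a multiset -/
def snds (L : List (ℤ × ℤ)) : Multiset ℤ := ↑(L.map Prod.snd)

lemma fsts_map (g : ℤ × ℤ → ℤ × ℤ) (f : ℤ → ℤ) (hfg : ∀ p, (g p).1 = f p.1)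
    (L : List (ℤ × ℤ)) : fsts (L.map g) = (fsts L).map f := by
  unfold fsts
  rw [Multiset.map_coe, List.map_map, List.map_map,
    show (Prod.fst ∘ g) = (f ∘ Prod.fst) from funext hfg]

lemma snds_map (g : ℤ × ℤ → ℤ × ℤ) (f : ℤ → ℤ) (hfg : ∀ p, (g p).2 = f p.2)
    (L : List (ℤ × ℤ)) : snds (L.map g) = (snds L).map f := by
  unfold snds
  rw [Multiset.map_coe, List.map_map, List.map_map,
    show (Prod.snd ∘ g) = (f ∘ Prod.snd) from funext hfg]

lemma fsts_append (X Y : List (ℤ × ℤ)) : fsts (X ++ Y) = fsts X + fsts Y := by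
  unfold fsts
  rw [List.map_append]
  exact (Multiset.coe_add _ _).symm

lemma snds_append (X Y : List (ℤ × ℤ)) : snds (X ++ Y) = snds X + snds Y := by
  unfold snds
  rw [List.map_append]
  exact (Multiset.coe_add _ _).symm

lemma fsts_cons (p : ℤ × ℤ) (L : List (ℤ × ℤ)) : fsts (p :: L) = p.1 ::ₘ fsts L := rfl

lemma snds_cons (p : ℤ × ℤ) (L : List (ℤ × ℤ)) : snds (p :: L) = p.2 ::ₘ snds L := rfl

/-! ### The basic block -/

/-- The basic block: pairs `(-k, k)` for `k = 0, …, m-1`. -/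
def q0 : ℕ → List (ℤ × ℤ)
  | 0 => []
  | m+1 => q0 m ++ [(-(m : ℤ), (m : ℤ))]

lemma q0_length : ∀ m, (q0 m).length = m
  | 0 => rfl
  | m+1 => by
    show (q0 m ++ _).length = m + 1
    rw [List.length_append, q0_length m]
    rfl

lemma q0_ne (m : ℕ) : q0 (m+1) ≠ [] := by
  intro h
  have := q0_length (m+1)
  rw [h] at this
  simp at this

lemma q0_headFst : ∀ m, headFst (q0 (m+1)) = 0
  | 0 => rfl
  | m+1 => by
    have ih := q0_headFst m
    show headFst (q0 (m+1) ++ _) = 0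
    rw [headFst_append _ _ (q0_ne m)]
    exact ih

lemma q0_lastSnd (m : ℕ) : lastSnd (q0 (m+1)) = (m : ℤ) := by
  show lastSnd (q0 m ++ [(-(m : ℤ), (m : ℤ))]) = (m : ℤ)
  rw [lastSnd_append _ (by simp)]
  rfl

lemma q0_fsts : ∀ m : ℕ, fsts (q0 m) = (Finset.Icc (1 - (m:ℤ)) 0).val
  | 0 => by
    refine Multiset.ext.mpr fun a => ?_
    rw [show fsts (q0 0) = 0 from rfl, Multiset.count_zero, count_Icc_val]
    split_ifs with h
    · omega
    · rfl
  | m+1 => by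
    have ih := q0_fsts m
    show fsts (q0 m ++ [(-(m : ℤ), (m : ℤ))]) = _
    rw [fsts_append, ih]
    refine Multiset.ext.mpr fun a => ?_
    rw [Multiset.count_add, count_Icc_val, count_Icc_val]
    rw [show fsts [(-(m : ℤ), (m : ℤ))] = (-(m:ℤ)) ::ₘ 0 from rfl]
    rw [Multiset.count_cons, Multiset.count_zero]
    push_cast
    split_ifs <;> omega

lemma q0_snds : ∀ m : ℕ, snds (q0 m) = (Finset.Icc 0 ((m:ℤ) - 1)).val
  | 0 => by
    refine Multiset.ext.mpr fun a => ?_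
    rw [show snds (q0 0) = 0 from rfl, Multiset.count_zero, count_Icc_val]
    split_ifs with h
    · omega
    · rfl
  | m+1 => by
    have ih := q0_snds m
    show snds (q0 m ++ [(-(m : ℤ), (m : ℤ))]) = _
    rw [snds_append, ih]
    refine Multiset.ext.mpr fun a => ?_
    rw [Multiset.count_add, count_Icc_val, count_Icc_val]
    rw [show snds [(-(m : ℤ), (m : ℤ))] = ((m:ℤ)) ::ₘ 0 from rfl]
    rw [Multiset.count_cons, Multiset.count_zero]
    push_cast
    split_ifs <;> omega

lemma q0_ndiffs : ∀ m, ndiffs (q0 (m+1)) = (Finset.Icc 0 (2*(m:ℤ))).val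
  | 0 => by
    refine Multiset.ext.mpr fun a => ?_
    rw [show ndiffs (q0 1) = {((0:ℕ):ℤ) - (-((0:ℕ):ℤ))} from rfl]
    rw [Multiset.count_singleton, count_Icc_val]
    push_cast
    split_ifs <;> omega
  | m+1 => by
    have ih := q0_ndiffs m
    show ndiffs (q0 (m+1) ++ [(-(↑(m+1) : ℤ), (↑(m+1) : ℤ))]) = _
    rw [ndiffs_append _ (q0_ne m) _ (by simp)]
    rw [q0_lastSnd m, ih]
    rw [show headFst [(-(↑(m+1) : ℤ), (↑(m+1) : ℤ))] = -(↑(m+1) : ℤ) from rfl]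
    rw [ndiffs_singleton]
    refine Multiset.ext.mpr fun a => ?_
    rw [Multiset.count_cons, Multiset.count_add, Multiset.count_singleton,
      count_Icc_val, count_Icc_val]
    push_cast
    split_ifs <;> omega

/-! ### The `Good` predicate and the three constructions -/

structure Good (N I : ℕ) (L : List (ℤ × ℤ)) : Prop where
  len : L.length = N + 1
  fst_ms : fsts L = (Finset.Icc 0 (N:ℤ)).val
  snd_ms : snds L = (Finset.Icc 0 (N:ℤ)).val
  nd : ndiffs L = (Finset.Icc (-(N:ℤ)) (N:ℤ)).val
  hd : headFst L = (I : ℤ)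
  lst : lastSnd L = (I : ℤ)

lemma Good.ne {N I : ℕ} {L : List (ℤ × ℤ)} (h : Good N I L) : L ≠ [] := by
  intro hL
  have := h.len
  rw [hL] at this
  simp at this

/-- The zigzag: a good path for `I = N`. -/
def Zg (I : ℕ) : List (ℤ × ℤ) := (q0 (I+1)).map fun p => (p.1 + (I:ℤ), p.2 + 0)

lemma Zg_ne (I : ℕ) : Zg I ≠ [] := by
  intro h
  have := congrArg List.length h
  rw [Zg, List.length_map, q0_length] at this
  simp at this

lemma good_Zg (I : ℕ) : Good I I (Zg I) := by
  constructor
  · rw [Zg, List.length_map, q0_length]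
  · rw [Zg, fsts_map _ (fun x => x + (I:ℤ)) (fun p => rfl), q0_fsts, Icc_val_map_add]
    congr 1 <;> push_cast <;> ring
  · rw [Zg, snds_map _ (fun x => x + (0:ℤ)) (fun p => rfl), q0_snds, Icc_val_map_add]
    congr 1 <;> push_cast <;> ring
  · rw [Zg, ndiffs_map_shift, q0_ndiffs, Icc_val_map_add]
    congr 1 <;> push_cast <;> ring
  · rw [Zg, headFst_map_shift _ _ _ (q0_ne I), q0_headFst]
    ring
  · rw [Zg, lastSnd_map_shift _ _ _ (q0_ne I), q0_lastSnd]
    ring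

/-- The middle construction: a good path for `N = 2I`. -/
def Mid (I : ℕ) : List (ℤ × ℤ) :=
  ((q0 I).map fun p => (p.1 + (I:ℤ), p.2 + ((I:ℤ)+1))) ++
    ((0, 0) :: ((q0 I).map fun p => (p.1 + 2*(I:ℤ), p.2 + 1)))

lemma good_Mid (I : ℕ) : Good (2*I) I (Mid I) := by
  rcases Nat.eq_zero_or_pos I with hI | hI
  · subst hI
    have hM : Mid 0 = [((0:ℤ), (0:ℤ))] := rfl
    constructor
    · rw [hM]; rfl
    · rw [hM]
      refine Multiset.ext.mpr fun a => ?_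
      rw [show fsts [((0:ℤ), (0:ℤ))] = (0:ℤ) ::ₘ 0 from rfl]
      rw [Multiset.count_cons, Multiset.count_zero, count_Icc_val]
      push_cast
      split_ifs <;> omega
    · rw [hM]
      refine Multiset.ext.mpr fun a => ?_
      rw [show snds [((0:ℤ), (0:ℤ))] = (0:ℤ) ::ₘ 0 from rfl]
      rw [Multiset.count_cons, Multiset.count_zero, count_Icc_val]
      push_cast
      split_ifs <;> omega
    · rw [hM, ndiffs_singleton]
      refine Multiset.ext.mpr fun a => ?_
      rw [Multiset.count_singleton, count_Icc_val]
      push_cast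
      split_ifs <;> omega
    · rw [hM]; rfl
    · rw [hM]; rfl
  obtain ⟨J, rfl⟩ : ∃ J, I = J + 1 := ⟨I - 1, by omega⟩
  set I' := J + 1 with hI'
  have hne : q0 I' ≠ [] := q0_ne J
  have hne1 : (q0 I').map (fun p : ℤ × ℤ => (p.1 + (I':ℤ), p.2 + ((I':ℤ)+1))) ≠ [] := by
    simpa using hne
  have hne2 : (q0 I').map (fun p : ℤ × ℤ => (p.1 + 2*(I':ℤ), p.2 + 1)) ≠ [] := by
    simpa using hne
  constructor
  · rw [Mid, List.length_append, List.length_cons, List.length_map, List.length_map, q0_length]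
    omega
  · rw [Mid, fsts_append, fsts_cons]
    rw [fsts_map _ (fun x => x + (I':ℤ)) (fun p => rfl),
      fsts_map _ (fun x => x + 2*(I':ℤ)) (fun p => rfl), q0_fsts,
      Icc_val_map_add, Icc_val_map_add]
    refine Multiset.ext.mpr fun a => ?_
    rw [Multiset.count_add, Multiset.count_cons, count_Icc_val, count_Icc_val, count_Icc_val]
    push_cast
    split_ifs <;> omega
  · rw [Mid, snds_append, snds_cons]
    rw [snds_map _ (fun x => x + ((I':ℤ)+1)) (fun p => rfl),
      snds_map _ (fun x => x + (1:ℤ)) (fun p => rfl), q0_snds,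
      Icc_val_map_add, Icc_val_map_add]
    refine Multiset.ext.mpr fun a => ?_
    rw [Multiset.count_add, Multiset.count_cons, count_Icc_val, count_Icc_val, count_Icc_val]
    push_cast
    split_ifs <;> omega
  · rw [Mid, ndiffs_append _ hne1 _ (by simp)]
    rw [lastSnd_map_shift _ _ _ hne, q0_lastSnd J]
    rw [ndiffs_cons _ _ hne2]
    rw [headFst_map_shift _ _ _ hne, q0_headFst J]
    rw [ndiffs_map_shift, ndiffs_map_shift, q0_ndiffs J]
    rw [Icc_val_map_add, Icc_val_map_add]
    rw [show headFst (((0:ℤ),(0:ℤ)) :: ((q0 I').map fun p : ℤ × ℤ =>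
      (p.1 + 2*(I':ℤ), p.2 + 1))) = (0:ℤ) from rfl]
    refine Multiset.ext.mpr fun a => ?_
    rw [Multiset.count_cons, Multiset.count_add, Multiset.count_cons, Multiset.count_cons,
      count_Icc_val, count_Icc_val, count_Icc_val]
    push_cast
    split_ifs <;> omega
  · rw [Mid, headFst_append _ _ hne1, headFst_map_shift _ _ _ hne, q0_headFst J]
    ring
  · rw [Mid, lastSnd_append _ (by simp)]
    cases hP : (q0 I').map (fun p : ℤ × ℤ => (p.1 + 2*(I':ℤ), p.2 + 1)) with
    | nil => exact absurd hP hne2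
    | cons q t =>
      rw [show lastSnd (((0:ℤ),(0:ℤ)) :: q :: t) = lastSnd (q :: t) from rfl, ← hP]
      rw [lastSnd_map_shift _ _ _ hne, q0_lastSnd J]
      push_cast
      omega

/-- Composition: a block on top of a (shifted) zigzag. -/
lemma good_compose {m I : ℕ} {G : List (ℤ × ℤ)} (hG : Good m I G) :
    Good (m + I + 1) I ((G.map fun p => (p.1 + 0, p.2 + ((I:ℤ)+1))) ++
      ((Zg I).map fun p => (p.1 + ((m:ℤ)+1), p.2 + 0))) := by
  have hZ := good_Zg I
  have hne1 : (G.map fun p : ℤ × ℤ => (p.1 + 0, p.2 + ((I:ℤ)+1))) ≠ [] := by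
    simpa using hG.ne
  have hne2 : ((Zg I).map fun p : ℤ × ℤ => (p.1 + ((m:ℤ)+1), p.2 + 0)) ≠ [] := by
    simpa using Zg_ne I
  constructor
  · rw [List.length_append, List.length_map, List.length_map, hG.len, hZ.len]
    omega
  · rw [fsts_append, fsts_map _ (fun x => x + (0:ℤ)) (fun p => rfl),
      fsts_map _ (fun x => x + ((m:ℤ)+1)) (fun p => rfl), hG.fst_ms, hZ.fst_ms,
      Icc_val_map_add, Icc_val_map_add]
    refine Multiset.ext.mpr fun a => ?_
    rw [Multiset.count_add, count_Icc_val, count_Icc_val, count_Icc_val]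
    push_cast
    split_ifs <;> omega
  · rw [snds_append, snds_map _ (fun x => x + ((I:ℤ)+1)) (fun p => rfl),
      snds_map _ (fun x => x + (0:ℤ)) (fun p => rfl), hG.snd_ms, hZ.snd_ms,
      Icc_val_map_add, Icc_val_map_add]
    refine Multiset.ext.mpr fun a => ?_
    rw [Multiset.count_add, count_Icc_val, count_Icc_val, count_Icc_val]
    push_cast
    split_ifs <;> omega
  · rw [ndiffs_append _ hne1 _ hne2]
    rw [lastSnd_map_shift _ _ _ hG.ne, hG.lst]
    rw [headFst_map_shift _ _ _ (Zg_ne I), hZ.hd]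
    rw [ndiffs_map_shift, ndiffs_map_shift, hG.nd, hZ.nd]
    rw [Icc_val_map_add, Icc_val_map_add]
    refine Multiset.ext.mpr fun a => ?_
    rw [Multiset.count_cons, Multiset.count_add, count_Icc_val, count_Icc_val, count_Icc_val]
    push_cast
    split_ifs <;> omega
  · rw [headFst_append _ _ hne1, headFst_map_shift _ _ _ hG.ne, hG.hd]
    ring
  · rw [lastSnd_append _ hne2, lastSnd_map_shift _ _ _ (Zg_ne I), hZ.lst]
    ring

/-- Reflection. -/
lemma good_reflect {N I : ℕ} {L : List (ℤ × ℤ)} (hI : I ≤ N) (h : Good N I L) :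
    Good N (N - I) (L.map fun p => ((N:ℤ) - p.1, (N:ℤ) - p.2)) := by
  constructor
  · rw [List.length_map, h.len]
  · rw [fsts_map _ (fun x => (N:ℤ) - x) (fun p => rfl), h.fst_ms, Icc_val_map_sub]
    congr 1 <;> ring
  · rw [snds_map _ (fun x => (N:ℤ) - x) (fun p => rfl), h.snd_ms, Icc_val_map_sub]
    congr 1 <;> ring
  · rw [ndiffs_map_reflect, h.nd, Icc_val_map_neg]
    congr 1 <;> ring
  · rw [headFst_map_reflect _ _ h.ne, h.hd]
    push_cast
    omega
  · rw [lastSnd_map_reflect _ _ h.ne, h.lst]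
    push_cast
    omega

lemma exists_good : ∀ N I : ℕ, I ≤ N → ∃ L, Good N I L := by
  intro N
  induction N using Nat.strong_induction_on with
  | _ N IH =>
    have low : ∀ J : ℕ, 2*J ≤ N → ∃ L, Good N J L := by
      intro J hJ
      rcases eq_or_lt_of_le hJ with h | h
      · exact ⟨Mid J, h ▸ good_Mid J⟩
      · have h1 : J ≤ N - J - 1 := by omega
        have h2 : N - J - 1 < N := by omega
        obtain ⟨G, hG⟩ := IH (N - J - 1) h2 J h1
        have hc := good_compose (I := J) hG
        rw [show N - J - 1 + J + 1 = N from by omega] at hc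
        exact ⟨_, hc⟩
    intro I hI
    rcases le_or_gt (2*I) N with h | h
    · exact low I h
    · obtain ⟨L, hL⟩ := low (N - I) (by omega)
      have hr := good_reflect (by omega) hL
      rw [show N - (N - I) = I from by omega] at hr
      exact ⟨_, hr⟩

/-! ### From pair lists to integer paths -/

def flat (w₁ w₂ : ℤ) (L : List (ℤ × ℤ)) : List ℤ :=
  L.flatMap fun p => [w₁ + p.1, w₂ + p.2]

lemma flat_cons (w₁ w₂ : ℤ) (p : ℤ × ℤ) (t : List (ℤ × ℤ)) :
    flat w₁ w₂ (p :: t) = (w₁ + p.1) :: (w₂ + p.2) :: flat w₁ w₂ t := rfl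

lemma flat_length (w₁ w₂ : ℤ) : ∀ L : List (ℤ × ℤ), (flat w₁ w₂ L).length = 2 * L.length
  | [] => rfl
  | p :: t => by
    rw [flat_cons, List.length_cons, List.length_cons, flat_length w₁ w₂ t, List.length_cons]
    ring

lemma flat_coe (w₁ w₂ : ℤ) : ∀ L : List (ℤ × ℤ),
    (↑(flat w₁ w₂ L) : Multiset ℤ) = (fsts L).map (fun x => w₁ + x)
      + (snds L).map (fun x => w₂ + x)
  | [] => rfl
  | p :: t => by
    have ih := flat_coe w₁ w₂ t
    rw [flat_cons]
    rw [show (↑((w₁ + p.1) :: (w₂ + p.2) :: flat w₁ w₂ t) : Multiset ℤ)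
      = (w₁ + p.1) ::ₘ (w₂ + p.2) ::ₘ ↑(flat w₁ w₂ t) from rfl]
    rw [ih, fsts_cons, snds_cons, Multiset.map_cons, Multiset.map_cons,
      Multiset.cons_add, Multiset.add_cons]

lemma flat_ne (w₁ w₂ : ℤ) (L : List (ℤ × ℤ)) (h : L ≠ []) : flat w₁ w₂ L ≠ [] := by
  cases L with
  | nil => exact absurd rfl h
  | cons p t => rw [flat_cons]; simp

lemma flat_head? (w₁ w₂ : ℤ) (L : List (ℤ × ℤ)) (h : L ≠ []) :
    (flat w₁ w₂ L).head? = some (w₁ + headFst L) := by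
  cases L with
  | nil => exact absurd rfl h
  | cons p t => rfl

lemma flat_getLast? (w₁ w₂ : ℤ) : ∀ L : List (ℤ × ℤ), L ≠ [] →
    (flat w₁ w₂ L).getLast? = some (w₂ + lastSnd L)
  | [], h => absurd rfl h
  | [p], _ => rfl
  | p :: q :: t, _ => by
    have ih := flat_getLast? w₁ w₂ (q :: t) (by simp)
    rw [flat_cons, List.getLast?_cons_cons]
    cases hf : flat w₁ w₂ (q :: t) with
    | nil => exact absurd hf (flat_ne _ _ _ (by simp))
    | cons x l =>
      rw [hf] at ih
      rw [List.getLast?_cons_cons, ih, lastSnd_cons_cons]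

lemma pathEdges_cons (a : ℤ) (l : List ℤ) (h : l ≠ []) :
    pathEdges (a :: l) = (a, l.headI) ::ₘ pathEdges l := by
  cases l with
  | nil => exact absurd rfl h
  | cons b t => rfl

lemma flat_edges (w₁ w₂ : ℤ) (A B : Finset ℤ) : ∀ L : List (ℤ × ℤ),
    (∀ q ∈ L, w₁ + q.1 ∈ A ∧ w₂ + q.2 ∈ B) →
    ∀ p ∈ pathEdges (flat w₁ w₂ L), (p.1 ∈ A ∧ p.2 ∈ B) ∨ (p.1 ∈ B ∧ p.2 ∈ A)
  | [] => by
    intro _ p hp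
    simp [flat, pathEdges] at hp
  | [q] => by
    intro hq p hp
    have hq' := hq q (by simp)
    have : p = (w₁ + q.1, w₂ + q.2) := by
      rw [show flat w₁ w₂ [q] = [w₁ + q.1, w₂ + q.2] from rfl] at hp
      rw [show pathEdges [w₁ + q.1, w₂ + q.2] = {(w₁ + q.1, w₂ + q.2)} from rfl] at hp
      simpa using hp
    rw [this]
    exact Or.inl hq'
  | q :: r :: t => by
    intro hq p hp
    have ih := flat_edges w₁ w₂ A B (r :: t)
      (fun x hx => hq x (List.mem_cons_of_mem _ hx)) p
    rw [flat_cons, pathEdges_cons _ _ (by simp),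
      pathEdges_cons _ _ (flat_ne _ _ _ (by simp))] at hp
    rw [Multiset.mem_cons, Multiset.mem_cons] at hp
    rcases hp with hp | hp | hp
    · have hq' := hq q (by simp)
      rw [hp]
      exact Or.inl ⟨by simpa using hq'.1, by simpa using hq'.2⟩
    · have hq' := hq q (by simp)
      have hr' := hq r (by simp)
      rw [hp]
      rw [show (flat w₁ w₂ (r :: t)).headI = w₁ + r.1 from rfl]
      exact Or.inr ⟨by simpa using hq'.2, hr'.1⟩
    · exact ih hp

lemma flat_diffs (w₁ w₂ : ℤ) : ∀ L : List (ℤ × ℤ),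
    diffs (pathEdges (flat w₁ w₂ L)) = (ndiffs L).map fun d => |w₁ - w₂ - d|
  | [] => rfl
  | [q] => by
    rw [show flat w₁ w₂ [q] = [w₁ + q.1, w₂ + q.2] from rfl]
    rw [show pathEdges [w₁ + q.1, w₂ + q.2] = {(w₁ + q.1, w₂ + q.2)} from rfl]
    rw [ndiffs_singleton]
    rw [diffs, Multiset.map_singleton, Multiset.map_singleton]
    congr 1
    rw [show (w₁ + q.1, w₂ + q.2).1 - (w₁ + q.1, w₂ + q.2).2
      = w₁ - w₂ - (q.2 - q.1) from by ring]
  | q :: r :: t => by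
    have ih := flat_diffs w₁ w₂ (r :: t)
    rw [flat_cons, pathEdges_cons _ _ (by simp),
      pathEdges_cons _ _ (flat_ne _ _ _ (by simp))]
    simp only [List.headI_cons]
    rw [diffs, Multiset.map_cons, Multiset.map_cons]
    rw [show (flat w₁ w₂ (r :: t)).headI = w₁ + r.1 from rfl]
    rw [ndiffs_cons_cons, Multiset.map_cons, Multiset.map_cons]
    rw [show diffs (pathEdges (flat w₁ w₂ (r :: t)))
      = Multiset.map (fun p : ℤ × ℤ => |p.1 - p.2|) (pathEdges (flat w₁ w₂ (r :: t)))
      from rfl] at ih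
    rw [ih]
    congr 1
    · rw [show (w₁ + q.1, w₂ + q.2).1 - (w₁ + q.1, w₂ + q.2).2
        = w₁ - w₂ - (q.2 - q.1) from by ring]
    congr 1
    · rw [show (w₂ + q.2, w₁ + r.1).1 - (w₂ + q.2, w₁ + r.1).2
        = -(w₁ - w₂ - (q.2 - r.1)) from by ring, abs_neg]

end Stmt5Aux

theorem stmt5 (γ₁ γ₂ : ℕ) (w₁ w₂ : ℤ) (hγ : γ₁ = γ₂) (hw : w₁ + (γ₁ : ℤ) < w₂)
    (i : ℕ) (hi : i ≤ γ₁) :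
    ∃ P : List ℤ,
      P.length = γ₁ + γ₂ + 2 ∧
      (↑P : Multiset ℤ)
        = (Finset.Icc w₁ (w₁ + (γ₁ : ℤ)) ∪ Finset.Icc w₂ (w₂ + (γ₂ : ℤ))).val ∧
      (∀ p ∈ pathEdges P,
        (p.1 ∈ Finset.Icc w₁ (w₁ + (γ₁ : ℤ)) ∧ p.2 ∈ Finset.Icc w₂ (w₂ + (γ₂ : ℤ))) ∨
        (p.1 ∈ Finset.Icc w₂ (w₂ + (γ₂ : ℤ)) ∧ p.2 ∈ Finset.Icc w₁ (w₁ + (γ₁ : ℤ)))) ∧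
      diffs (pathEdges P) = (Finset.Icc (w₂ - (w₁ + (γ₁ : ℤ))) (w₂ + (γ₂ : ℤ) - w₁)).val ∧
      P.head? = some (w₁ + (i : ℤ)) ∧ P.getLast? = some (w₂ + (i : ℤ)) := by
  subst hγ
  obtain ⟨L, hL⟩ := Stmt5Aux.exists_good γ₁ i hi
  refine ⟨Stmt5Aux.flat w₁ w₂ L, ?_, ?_, ?_, ?_, ?_, ?_⟩
  · rw [Stmt5Aux.flat_length, hL.len]
    ring
  · rw [Stmt5Aux.flat_coe, hL.fst_ms, hL.snd_ms,
      Stmt5Aux.Icc_val_map_addl, Stmt5Aux.Icc_val_map_addl]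
    have hd : Disjoint (Finset.Icc w₁ (w₁ + (γ₁:ℤ))) (Finset.Icc w₂ (w₂ + (γ₁:ℤ))) := by
      simp only [Finset.disjoint_left, Finset.mem_Icc]
      intro x hx hx'
      omega
    rw [← Finset.disjUnion_eq_union _ _ hd]
    rw [show (Finset.disjUnion _ _ hd).val
      = (Finset.Icc w₁ (w₁ + (γ₁:ℤ))).val + (Finset.Icc w₂ (w₂ + (γ₁:ℤ))).val from rfl]
    congr 2 <;> ring
  · intro p hp
    refine Stmt5Aux.flat_edges w₁ w₂ _ _ L ?_ p hp
    intro q hq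
    constructor
    · have h1 : q.1 ∈ Stmt5Aux.fsts L := by
        rw [Stmt5Aux.fsts]
        exact Multiset.mem_coe.mpr (List.mem_map_of_mem (f := Prod.fst) hq)
      rw [hL.fst_ms, Finset.mem_val, Finset.mem_Icc] at h1
      rw [Finset.mem_Icc]
      omega
    · have h2 : q.2 ∈ Stmt5Aux.snds L := by
        rw [Stmt5Aux.snds]
        exact Multiset.mem_coe.mpr (List.mem_map_of_mem (f := Prod.snd) hq)
      rw [hL.snd_ms, Finset.mem_val, Finset.mem_Icc] at h2
      rw [Finset.mem_Icc]
      omega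
  · rw [Stmt5Aux.flat_diffs, hL.nd]
    have hcg : ∀ d ∈ (Finset.Icc (-(γ₁:ℤ)) (γ₁:ℤ)).val,
        |w₁ - w₂ - d| = d + (w₂ - w₁) := by
      intro d hd
      rw [Finset.mem_val, Finset.mem_Icc] at hd
      rw [abs_of_nonpos (by omega)]
      ring
    rw [Multiset.map_congr rfl hcg, Stmt5Aux.Icc_val_map_add]
    congr 1 <;> ring
  · rw [Stmt5Aux.flat_head? _ _ _ hL.ne, hL.hd]
  · rw [Stmt5Aux.flat_getLast? _ _ _ hL.ne, hL.lst]
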